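/- Let X be a random variable with E[|X|] < ∞ and N ~ N(0,1) independent of X, and set Y = X + N. Define f(y) := E[X e^{−(X−y)²/2}] / E[e^{−(X−y)²/2}] (which equals E[X | Y = y]) and g₂(y) := E[(X − f(y))² e^{−(X−y)²/2}] / E[e^{−(X−y)²/2}] (which equals the conditional variance Var[X | Y = y]). Then f is differentiable on ℝ and f′(y) = g₂(y) for every y ∈ ℝ. -/

import Mathlib

open MeasureTheory ProbabilityTheory Real Filter

private lemma aux_exp_le_one (t : ℝ) : Real.exp (-t ^ 2 / 2) ≤ 1 := by
  rw [← Real.exp_zero]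
  apply Real.exp_le_exp.mpr
  nlinarith [sq_nonneg t]

private lemma aux_abs_le (t : ℝ) : |t| * Real.exp (-t ^ 2 / 2) ≤ 1 := by
  have h1 : -t ^ 2 / 2 = -(t ^ 2 / 2) := by ring
  rw [h1, Real.exp_neg]
  rw [mul_inv_le_iff₀ (Real.exp_pos _), one_mul]
  nlinarith [Real.add_one_le_exp (t ^ 2 / 2), sq_nonneg (|t| - 1), sq_abs t]

private lemma aux_sq_le (t : ℝ) : t ^ 2 * Real.exp (-t ^ 2 / 2) ≤ 2 := by
  have h1 : -t ^ 2 / 2 = -(t ^ 2 / 2) := by ring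
  rw [h1, Real.exp_neg]
  rw [mul_inv_le_iff₀ (Real.exp_pos _)]
  nlinarith [Real.add_one_le_exp (t ^ 2 / 2)]

private lemma aux_hasDerivAt (c x : ℝ) :
    HasDerivAt (fun x : ℝ => Real.exp (-(c - x) ^ 2 / 2))
      ((c - x) * Real.exp (-(c - x) ^ 2 / 2)) x := by
  have h : HasDerivAt (fun x : ℝ => -(c - x) ^ 2 / 2) (c - x) x := by
    have h1 : HasDerivAt (fun x : ℝ => c - x) (-1) x := by
      simpa using (hasDerivAt_id x).const_sub c
    have h2 : HasDerivAt (fun x : ℝ => -(c - x) ^ 2 / 2)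
        (-(((2:ℕ):ℝ) * (c - x) ^ (2 - 1) * -1) / 2) x := (h1.pow 2).neg.div_const 2
    convert h2 using 1
    ring
  simpa [mul_comm] using h.exp

/-- Differentiation under the integral sign for Gaussian smoothing. -/
private lemma key {Ω : Type*} [MeasurableSpace Ω] (μ : Measure Ω) [IsProbabilityMeasure μ]
    (X W : Ω → ℝ) (hX : Measurable X) (hW : Measurable W) (hWint : Integrable W μ) (y : ℝ) :
    HasDerivAt (fun t : ℝ => ∫ ω, W ω * Real.exp (-(X ω - t) ^ 2 / 2) ∂μ)
      (∫ ω, W ω * ((X ω - y) * Real.exp (-(X ω - y) ^ 2 / 2)) ∂μ) y := by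
  have hmeas : ∀ t : ℝ, AEStronglyMeasurable (fun ω => W ω * Real.exp (-(X ω - t) ^ 2 / 2)) μ :=
    fun t => (hW.mul (((hX.sub measurable_const).pow_const 2).neg.div_const
      2).exp).aestronglyMeasurable
  have hmeas' : AEStronglyMeasurable
      (fun ω => W ω * ((X ω - y) * Real.exp (-(X ω - y) ^ 2 / 2))) μ :=
    (hW.mul ((hX.sub measurable_const).mul (((hX.sub measurable_const).pow_const
      2).neg.div_const 2).exp)).aestronglyMeasurable
  have hint : Integrable (fun ω => W ω * Real.exp (-(X ω - y) ^ 2 / 2)) μ := by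
    refine hWint.mono (hmeas y) (Filter.Eventually.of_forall fun ω => ?_)
    rw [norm_mul]
    have h1 := aux_exp_le_one (X ω - y)
    have h2 := (Real.exp_pos (-(X ω - y) ^ 2 / 2)).le
    calc ‖W ω‖ * ‖Real.exp (-(X ω - y) ^ 2 / 2)‖ ≤ ‖W ω‖ * 1 := by
          apply mul_le_mul_of_nonneg_left _ (norm_nonneg _)
          rwa [Real.norm_eq_abs, abs_of_nonneg h2]
      _ = ‖W ω‖ := mul_one _
  have H := hasDerivAt_integral_of_dominated_loc_of_deriv_le (μ := μ)
    (F := fun t ω => W ω * Real.exp (-(X ω - t) ^ 2 / 2))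
    (F' := fun t ω => W ω * ((X ω - t) * Real.exp (-(X ω - t) ^ 2 / 2)))
    (bound := fun ω => |W ω|) (x₀ := y) (Metric.ball_mem_nhds y one_pos)
    (Filter.Eventually.of_forall fun t => hmeas t) hint
    (by
      have : AEStronglyMeasurable
          (fun ω => W ω * ((X ω - y) * Real.exp (-(X ω - y) ^ 2 / 2))) μ := hmeas'
      exact this)
    (Filter.Eventually.of_forall fun ω => fun x _ => by
      rw [norm_mul, Real.norm_eq_abs, Real.norm_eq_abs]
      have h1 : |(X ω - x) * Real.exp (-(X ω - x) ^ 2 / 2)| ≤ 1 := by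
        rw [abs_mul, abs_of_nonneg (Real.exp_pos _).le]
        exact aux_abs_le (X ω - x)
      calc |W ω| * |(X ω - x) * Real.exp (-(X ω - x) ^ 2 / 2)| ≤ |W ω| * 1 :=
            mul_le_mul_of_nonneg_left h1 (abs_nonneg _)
        _ = |W ω| := mul_one _)
    hWint.abs
    (Filter.Eventually.of_forall fun ω => fun x _ =>
      (aux_hasDerivAt (X ω) x).const_mul (W ω))
  exact H.2

theorem hasDerivAt_condexp_eq_condVar
    {Ω : Type*} [MeasurableSpace Ω] (μ : Measure Ω) [IsProbabilityMeasure μ]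
    (X N : Ω → ℝ) (hXmeas : Measurable X) (hNmeas : Measurable N)
    (hXint : Integrable X μ)
    (hN : Measure.map N μ = gaussianReal 0 1)
    (hindep : IndepFun X N μ)
    (f g₂ : ℝ → ℝ)
    (hf : ∀ y, f y = (∫ ω, X ω * Real.exp (-(X ω - y) ^ 2 / 2) ∂μ) /
        (∫ ω, Real.exp (-(X ω - y) ^ 2 / 2) ∂μ))
    (hg₂ : ∀ y, g₂ y = (∫ ω, (X ω - f y) ^ 2 * Real.exp (-(X ω - y) ^ 2 / 2) ∂μ) /
        (∫ ω, Real.exp (-(X ω - y) ^ 2 / 2) ∂μ)) :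
    ∀ y : ℝ, HasDerivAt f (g₂ y) y := by
  intro y
  -- measurability of the kernel
  have hEmeas : ∀ t : ℝ, Measurable (fun ω => Real.exp (-(X ω - t) ^ 2 / 2)) :=
    fun t => (((hXmeas.sub measurable_const).pow_const 2).neg.div_const 2).exp
  have hEpos : ∀ ω, 0 < Real.exp (-(X ω - y) ^ 2 / 2) := fun ω => Real.exp_pos _
  -- integrability facts at y
  have iE : Integrable (fun ω => Real.exp (-(X ω - y) ^ 2 / 2)) μ := by
    refine (integrable_const (1 : ℝ)).mono (hEmeas y).aestronglyMeasurable
      (Filter.Eventually.of_forall fun ω => ?_)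
    rw [Real.norm_eq_abs, abs_of_pos (hEpos ω)]
    simpa using aux_exp_le_one (X ω - y)
  have iXE : Integrable (fun ω => X ω * Real.exp (-(X ω - y) ^ 2 / 2)) μ := by
    refine hXint.mono (hXmeas.mul (hEmeas y)).aestronglyMeasurable
      (Filter.Eventually.of_forall fun ω => ?_)
    rw [norm_mul, Real.norm_eq_abs (Real.exp _), abs_of_pos (hEpos ω)]
    nlinarith [aux_exp_le_one (X ω - y), norm_nonneg (X ω), (hEpos ω).le]
  have iX2E : Integrable (fun ω => X ω ^ 2 * Real.exp (-(X ω - y) ^ 2 / 2)) μ := by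
    refine (integrable_const (4 + 2 * y ^ 2 : ℝ)).mono
      ((hXmeas.pow_const 2).mul (hEmeas y)).aestronglyMeasurable
      (Filter.Eventually.of_forall fun ω => ?_)
    rw [Real.norm_eq_abs, Real.norm_eq_abs, abs_mul, abs_of_pos (hEpos ω),
      abs_of_nonneg (sq_nonneg (X ω)), abs_of_nonneg (by positivity : (0:ℝ) ≤ 4 + 2 * y ^ 2)]
    have h1 := aux_sq_le (X ω - y)
    have h2 := aux_exp_le_one (X ω - y)
    have h3 := (hEpos ω).le
    nlinarith [mul_nonneg (sq_nonneg (X ω - 2 * y)) h3, sq_nonneg y]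
  -- positivity of the denominator
  have hApos : 0 < ∫ ω, Real.exp (-(X ω - y) ^ 2 / 2) ∂μ := integral_exp_pos iE
  set A := ∫ ω, Real.exp (-(X ω - y) ^ 2 / 2) ∂μ with hA
  set B := ∫ ω, X ω * Real.exp (-(X ω - y) ^ 2 / 2) ∂μ with hB
  set C := ∫ ω, X ω ^ 2 * Real.exp (-(X ω - y) ^ 2 / 2) ∂μ with hC
  -- derivatives of numerator and denominator
  have hD : HasDerivAt (fun t : ℝ => ∫ ω, Real.exp (-(X ω - t) ^ 2 / 2) ∂μ)
      (B - y * A) y := by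
    have H := key μ X (fun _ => 1) hXmeas measurable_const (integrable_const 1) y
    simp only [one_mul] at H
    convert H using 1
    have heq : (fun ω => (X ω - y) * Real.exp (-(X ω - y) ^ 2 / 2)) =
        fun ω => X ω * Real.exp (-(X ω - y) ^ 2 / 2) -
          y * Real.exp (-(X ω - y) ^ 2 / 2) := by
      funext ω; ring
    rw [heq, integral_sub iXE (iE.const_mul y), integral_const_mul]
  have hNu : HasDerivAt (fun t : ℝ => ∫ ω, X ω * Real.exp (-(X ω - t) ^ 2 / 2) ∂μ)
      (C - y * B) y := by
    have H := key μ X X hXmeas hXmeas hXint y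
    convert H using 1
    have heq : (fun ω => X ω * ((X ω - y) * Real.exp (-(X ω - y) ^ 2 / 2))) =
        fun ω => X ω ^ 2 * Real.exp (-(X ω - y) ^ 2 / 2) -
          y * (X ω * Real.exp (-(X ω - y) ^ 2 / 2)) := by
      funext ω; ring
    rw [heq, integral_sub iX2E (iXE.const_mul y), integral_const_mul]
  -- the quotient rule
  have hdiv : HasDerivAt (fun t : ℝ => (∫ ω, X ω * Real.exp (-(X ω - t) ^ 2 / 2) ∂μ) /
      (∫ ω, Real.exp (-(X ω - t) ^ 2 / 2) ∂μ))
      (((C - y * B) * A - B * (B - y * A)) / A ^ 2) y :=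
    hNu.div hD hApos.ne'
  have hfun : f = fun t : ℝ => (∫ ω, X ω * Real.exp (-(X ω - t) ^ 2 / 2) ∂μ) /
      (∫ ω, Real.exp (-(X ω - t) ^ 2 / 2) ∂μ) := funext hf
  -- compute g₂ y
  have hfy : f y = B / A := hf y
  have hg2 : g₂ y = ((C - y * B) * A - B * (B - y * A)) / A ^ 2 := by
    rw [hg₂ y, hfy]
    have heq : (fun ω => (X ω - B / A) ^ 2 * Real.exp (-(X ω - y) ^ 2 / 2)) =
        fun ω => (X ω ^ 2 * Real.exp (-(X ω - y) ^ 2 / 2) -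
          (2 * (B / A)) * (X ω * Real.exp (-(X ω - y) ^ 2 / 2))) +
          (B / A) ^ 2 * Real.exp (-(X ω - y) ^ 2 / 2) := by
      funext ω; ring
    have i1 : Integrable (fun ω => X ω ^ 2 * Real.exp (-(X ω - y) ^ 2 / 2) -
        2 * (B / A) * (X ω * Real.exp (-(X ω - y) ^ 2 / 2))) μ :=
      iX2E.sub (iXE.const_mul _)
    have i2 : Integrable (fun ω => (B / A) ^ 2 * Real.exp (-(X ω - y) ^ 2 / 2)) μ :=
      iE.const_mul _
    rw [heq, integral_add i1 i2, integral_sub iX2E (iXE.const_mul _),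
      integral_const_mul, integral_const_mul]
    rw [← hA, ← hB, ← hC]
    field_simp
    ring
  rw [hfun, hg2]
  exact hdiv
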